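/- arXiv:1402.2712 — 6 statements merged into one kernel-verified Lean document; each statement's English description precedes it below -/
import Mathlib

section
/- Every non-nil full balanced binary tree t satisfies (Tree.numLeaves t : ℝ) ≥ φ^(Tree.height t − 1). -/
/-- The golden ratio `(1 + √5)/2`. -/
noncomputable def goldenRatioReal : ℝ := (1 + Real.sqrt 5) / 2

/-- A binary tree is full if every node has either both subtrees nil or both non-nil. -/
def IsFullTree {α : Type*} : Tree α → Prop
  | BinaryTree.nil => True
  | BinaryTree.node _ l r =>
      ((l = Tree.nil ∧ r = Tree.nil) ∨ (l ≠ Tree.nil ∧ r ≠ Tree.nil)) ∧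
      IsFullTree l ∧ IsFullTree r

/-- A binary tree is balanced if at every node the heights of the two subtrees
differ by at most 1. -/
def IsBalancedTree {α : Type*} : Tree α → Prop
  | BinaryTree.nil => True
  | BinaryTree.node _ l r =>
      (Tree.height l ≤ Tree.height r + 1 ∧ Tree.height r ≤ Tree.height l + 1) ∧
      IsBalancedTree l ∧ IsBalancedTree r

lemma goldenReal_eq : goldenRatioReal = Real.goldenRatio := rfl

lemma gold_one_le : (1:ℝ) ≤ goldenRatioReal := by
  rw [goldenReal_eq]; exact Real.one_lt_goldenRatio.le

lemma gold_le_two : goldenRatioReal ≤ 2 := by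
  rw [goldenReal_eq, Real.goldenRatio]
  nlinarith [Real.sq_sqrt (by norm_num : (5:ℝ) ≥ 0), Real.sqrt_nonneg 5]

lemma key (a b : ℕ) (ha : 1 ≤ a) (hb : 1 ≤ b) (hab : a ≤ b + 1) (hba : b ≤ a + 1) :
    goldenRatioReal ^ (max a b) ≤ goldenRatioReal ^ (a - 1) + goldenRatioReal ^ (b - 1) := by
  wlog h : a ≤ b generalizing a b
  · rw [max_comm, add_comm]; exact this b a hb ha hba hab (le_of_not_ge h)
  rw [max_eq_right h]
  rcases Nat.lt_or_ge b 2 with h2 | h2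
  · interval_cases b <;> interval_cases a <;>
      simpa using by linarith [gold_le_two, gold_one_le]
  · have hab' : b - 2 ≤ a - 1 := by omega
    have h1 : goldenRatioReal ^ (b - 2) ≤ goldenRatioReal ^ (a - 1) :=
      pow_le_pow_right₀ gold_one_le hab'
    have hb2 : b = (b - 2) + 2 := by omega
    have hsq : goldenRatioReal ^ 2 = goldenRatioReal + 1 := Real.goldenRatio_sq
    have hb1 : b - 1 = (b - 2) + 1 := by omega
    calc goldenRatioReal ^ b = goldenRatioReal ^ (b-2) * goldenRatioReal ^ 2 := by
          rw [← pow_add, Nat.sub_add_cancel h2]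
      _ = goldenRatioReal ^ (b-2) * goldenRatioReal + goldenRatioReal ^ (b-2) := by
          rw [hsq]; ring
      _ = goldenRatioReal ^ (b-1) + goldenRatioReal ^ (b-2) := by rw [hb1, pow_succ]
      _ ≤ goldenRatioReal ^ (a-1) + goldenRatioReal ^ (b-1) := by linarith
      
lemma height_pos_of_ne_nil {α : Type*} (t : Tree α) (h : t ≠ Tree.nil) : 1 ≤ t.height := by
  cases t with
  | nil => exact absurd rfl h
  | node v l r => simp [Tree.height]

/-- Every non-nil full balanced binary tree `t` satisfies
`(Tree.numLeaves t : ℝ) ≥ φ ^ (Tree.height t - 1)`. -/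
theorem numLeaves_ge_goldenRatio_pow_height {α : Type*} (t : Tree α)
    (hne : t ≠ Tree.nil) (hfull : IsFullTree t) (hbal : IsBalancedTree t) :
    (Tree.numLeaves t : ℝ) ≥ goldenRatioReal ^ (Tree.height t - 1) := by
  induction t with
  | nil => exact absurd rfl hne
  | node v l r ihl ihr =>
    obtain ⟨hcase, hfl, hfr⟩ := hfull
    obtain ⟨⟨hlr, hrl⟩, hbl, hbr⟩ := hbal
    rcases hcase with ⟨hl, hr⟩ | ⟨hl, hr⟩
    · subst hl; subst hr
      simp [Tree.numLeaves, Tree.height]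
    · have ihl' := ihl hl hfl hbl
      have ihr' := ihr hr hfr hbr
      have hhl := height_pos_of_ne_nil l hl
      have hhr := height_pos_of_ne_nil r hr
      have hk := key l.height r.height hhl hhr hlr hrl
      have hheight : Tree.height (Tree.node v l r) - 1 = max l.height r.height := by
        simp [Tree.height]
      rw [ge_iff_le, hheight, Tree.numLeaves, BinaryTree.numLeaves, Nat.cast_add]
      calc goldenRatioReal ^ (max l.height r.height)
          ≤ goldenRatioReal ^ (l.height - 1) + goldenRatioReal ^ (r.height - 1) := hk
        _ ≤ (l.numLeaves : ℝ) + (r.numLeaves : ℝ) := add_le_add ihl' ihr'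
end

section
/- For every real b > e^(1/e) and every real x, there exists i ∈ ℕ such that log_b^[i](x) ≤ 1. In particular, the set {i ∈ ℕ : log_b^[i](x) ≤ 1} is nonempty, so the iterated logarithm log*_b(x) is well defined. -/
/-- For every real base `b > e^(1/e)` and every real `x`, some iterate of `log_b`
takes `x` to a value at most 1; in particular the set `{i | log_b^[i] x ≤ 1}`
is nonempty, so the iterated logarithm `log*_b x` is well defined. -/
theorem exists_iterate_logb_le_one (b : ℝ) (hb : Real.exp (1 / Real.exp 1) < b) (x : ℝ) :
    (∃ i : ℕ, (Real.logb b)^[i] x ≤ 1) ∧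
      {i : ℕ | (Real.logb b)^[i] x ≤ 1}.Nonempty := by
  have hbpos : (0:ℝ) < b := lt_trans (Real.exp_pos _) hb
  set c := Real.log b with hc
  have hclb : 1 / Real.exp 1 < c := (Real.lt_log_iff_exp_lt hbpos).2 hb
  have hcpos : 0 < c := lt_trans (by positivity) hclb
  have hlogc : (-1 : ℝ) < Real.log c := by
    rw [Real.lt_log_iff_exp_lt hcpos, Real.exp_neg]
    simpa [one_div] using hclb
  set δ := (1 + Real.log c) / c with hδ
  have hδpos : 0 < δ := div_pos (by linarith) hcpos
  -- key step: for y > 0, log_b y ≤ y - δ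
  have key : ∀ y : ℝ, 0 < y → Real.logb b y ≤ y - δ := by
    intro y hy
    have h1 : Real.log (c * y) ≤ c * y - 1 :=
      Real.log_le_sub_one_of_pos (mul_pos hcpos hy)
    rw [Real.log_mul (ne_of_gt hcpos) (ne_of_gt hy)] at h1
    rw [Real.logb, hδ, div_le_iff₀ hcpos] at *
    have : (y - (1 + Real.log c) / c) * c = c * y - 1 - Real.log c := by
      field_simp; ring
    rw [this]
    linarith
  suffices h : ∃ i : ℕ, (Real.logb b)^[i] x ≤ 1 from ⟨h, h⟩
  have main : ∀ n : ℕ, (∃ i : ℕ, (Real.logb b)^[i] x ≤ 1) ∨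
      (Real.logb b)^[n] x ≤ x - n * δ := by
    intro n
    induction n with
    | zero => right; simp
    | succ n ih =>
      rcases ih with h | h
      · left; exact h
      · by_cases h1 : (Real.logb b)^[n] x ≤ 1
        · left; exact ⟨n, h1⟩
        · right
          push_neg at h1
          have hy : 0 < (Real.logb b)^[n] x := lt_trans one_pos h1
          have := key _ hy
          rw [Function.iterate_succ_apply']
          push_cast
          linarith
  obtain ⟨n, hn⟩ := exists_nat_ge ((x - 1) / δ)
  rcases main n with h | h
  · exact h
  · refine ⟨n, ?_⟩
    rw [div_le_iff₀ hδpos] at hn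
    linarith
end

section
/- For every real b > e^(1/e) and every i ∈ ℕ, there exists a real n' > 0 such that for all real n > n', (log*_b(n) : ℝ) ≤ log_b^[i](n). -/
/-- The iterated logarithm `log*_b x`: the least `i` such that `log_b^[i] x ≤ 1`. -/
noncomputable def logStar (b x : ℝ) : ℕ := sInf {i : ℕ | (Real.logb b)^[i] x ≤ 1}

private lemma descend (b δ : ℝ) (hδ : 0 < δ)
    (hstep : ∀ x : ℝ, 0 < x → Real.logb b x ≤ x - δ) :
    ∀ K : ℕ, ∀ x : ℝ, x ≤ 1 + K * δ → ∃ k ≤ K, (Real.logb b)^[k] x ≤ 1 := by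
  intro K
  induction K with
  | zero => intro x hx; exact ⟨0, le_refl 0, by simpa using hx⟩
  | succ K ih =>
    intro x hx
    by_cases h1 : x ≤ 1
    · exact ⟨0, Nat.zero_le _, by simpa using h1⟩
    · push_neg at h1
      have hx0 : 0 < x := lt_trans one_pos h1
      have hstep' := hstep x hx0
      have hcast : ((K + 1 : ℕ) : ℝ) = (K : ℝ) + 1 := by push_cast; ring
      have hnext : Real.logb b x ≤ 1 + K * δ := by
        rw [hcast] at hx; nlinarith
      obtain ⟨k, hk, hk1⟩ := ih (Real.logb b x) hnext
      exact ⟨k + 1, Nat.succ_le_succ hk, by rwa [Function.iterate_succ_apply]⟩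

private lemma grow (b : ℝ) (hb1 : 1 < b) :
    ∀ i : ℕ, ∀ M : ℝ, ∃ n' : ℝ, 0 < n' ∧ ∀ n : ℝ, n' < n → M < (Real.logb b)^[i] n := by
  intro i
  induction i with
  | zero =>
    intro M
    exact ⟨max M 1, lt_of_lt_of_le one_pos (le_max_right _ _),
      fun n hn => by simpa using lt_of_le_of_lt (le_max_left M 1) hn⟩
  | succ i ih =>
    intro M
    obtain ⟨n', hn'pos, hn'⟩ := ih M
    refine ⟨max (b ^ n') 1, lt_of_lt_of_le one_pos (le_max_right _ _), fun n hn => ?_⟩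
    rw [Function.iterate_succ_apply]
    apply hn'
    have hb0 : (0:ℝ) < b := lt_trans one_pos hb1
    have hbn' : b ^ n' < n := lt_of_le_of_lt (le_max_left _ _) hn
    have h : Real.logb b (b ^ n') < Real.logb b n :=
      Real.logb_lt_logb hb1 (Real.rpow_pos_of_pos hb0 n') hbn'
    rwa [Real.logb_rpow (by positivity) (ne_of_gt hb1)] at h

set_option maxHeartbeats 1600000 in
/-- For every base `b > e^(1/e)` and every `i`, the iterated logarithm `log*_b n` is
eventually at most the `i`-fold iterate `log_b^[i] n`. -/
theorem logStar_eventually_le_iterate_logb (b : ℝ)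
    (hb : Real.exp (1 / Real.exp 1) < b) (i : ℕ) :
    ∃ n' : ℝ, 0 < n' ∧ ∀ n : ℝ, n' < n → (logStar b n : ℝ) ≤ (Real.logb b)^[i] n := by
  have he : (0:ℝ) < Real.exp 1 := Real.exp_pos 1
  have h1e : (1:ℝ) < Real.exp (1 / Real.exp 1) := by
    rw [show (1:ℝ) = Real.exp 0 by simp]
    exact Real.exp_lt_exp.mpr (by positivity)
  have hb1 : 1 < b := lt_trans h1e hb
  have hb0 : (0:ℝ) < b := lt_trans one_pos hb1
  have hlogb : 1 / Real.exp 1 < Real.log b := (Real.lt_log_iff_exp_lt hb0).mpr hb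
  have hlb0 : 0 < Real.log b := lt_trans (by positivity) hlogb
  obtain ⟨c, hc_def⟩ : ∃ c : ℝ, c = (Real.log b)⁻¹ := ⟨_, rfl⟩
  have hc0 : 0 < c := by rw [hc_def]; positivity
  have hc1 : c * Real.log b = 1 := by rw [hc_def]; exact inv_mul_cancel₀ (ne_of_gt hlb0)
  have hce : c < Real.exp 1 := by
    have h1 : (Real.exp 1)⁻¹ < Real.log b := by rwa [one_div] at hlogb
    have h2 := inv_strictAnti₀ (by positivity) h1
    rw [inv_inv] at h2
    rwa [hc_def]
  have hlogc : Real.log c < 1 := by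
    have := Real.log_lt_log hc0 hce
    rwa [Real.log_exp] at this
  obtain ⟨δ, hδ_def⟩ : ∃ δ : ℝ, δ = c - c * Real.log c := ⟨_, rfl⟩
  have hδ0 : 0 < δ := by rw [hδ_def]; nlinarith
  obtain ⟨δ', hδ'_def⟩ : ∃ δ' : ℝ, δ' = min δ 1 := ⟨_, rfl⟩
  have hδ'0 : 0 < δ' := by rw [hδ'_def]; exact lt_min hδ0 one_pos
  have hδ'1 : δ' ≤ 1 := by rw [hδ'_def]; exact min_le_right _ _
  have hδ'δ : δ' ≤ δ := by rw [hδ'_def]; exact min_le_left _ _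
  have hstep : ∀ x : ℝ, 0 < x → Real.logb b x ≤ x - δ' := by
    intro x hx0
    have hxc : 0 < x / c := by positivity
    have h := Real.log_le_sub_one_of_pos hxc
    rw [Real.log_div (ne_of_gt hx0) (ne_of_gt hc0)] at h
    have hxc2 : c * (x / c) = x := by field_simp
    have hlogb_eq : Real.logb b x = c * Real.log x := by
      rw [Real.logb, div_eq_inv_mul, ← hc_def]
    rw [hlogb_eq]
    have := mul_le_mul_of_nonneg_left h (le_of_lt hc0)
    rw [hδ_def]  at *
    nlinarith
  obtain ⟨n', hn'0, hn'⟩ := grow b hb1 i (16 * Real.exp 1 ^ 2 / δ' ^ 2 + 2 * i + 4)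
  refine ⟨n', hn'0, fun n hn => ?_⟩
  obtain ⟨m, hm_def⟩ : ∃ m : ℝ, m = (Real.logb b)^[i] n := ⟨_, rfl⟩
  have hm : 16 * Real.exp 1 ^ 2 / δ' ^ 2 + 2 * i + 4 < m := by
    rw [hm_def]; exact hn' n hn
  rw [← hm_def]
  have hipos : (0:ℝ) ≤ i := Nat.cast_nonneg i
  have hdpos : 0 < 16 * Real.exp 1 ^ 2 / δ' ^ 2 := by positivity
  have hmi : 2 * (i:ℝ) + 4 ≤ m := by linarith
  have hm1' : (1:ℝ) ≤ m := by linarith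
  have hm0 : (0:ℝ) < m := lt_of_lt_of_le one_pos hm1'
  have hmbig : 16 * Real.exp 1 ^ 2 / δ' ^ 2 ≤ m := by linarith
  obtain ⟨m1, hm1_def⟩ : ∃ m1 : ℝ, m1 = Real.logb b m := ⟨_, rfl⟩
  have hm1nn : 0 ≤ m1 := by rw [hm1_def]; exact Real.logb_nonneg hb1 hm1'
  have hsqnn : 0 ≤ Real.sqrt m := Real.sqrt_nonneg m
  have hsq0 : 0 < Real.sqrt m := Real.sqrt_pos.mpr hm0
  have hsqsq : Real.sqrt m * Real.sqrt m = m := Real.mul_self_sqrt (le_of_lt hm0)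
  have hlogm_nn : 0 ≤ Real.log m := Real.log_nonneg hm1'
  have hlogm : Real.log m ≤ 2 * Real.sqrt m := by
    have h1 := Real.log_le_sub_one_of_pos hsq0
    have h2 : Real.log (Real.sqrt m) = Real.log m / 2 := Real.log_sqrt (le_of_lt hm0)
    nlinarith
  have hm1le : m1 ≤ 2 * Real.exp 1 * Real.sqrt m := by
    have hlogb_eq : m1 = c * Real.log m := by
      rw [hm1_def, Real.logb, div_eq_inv_mul, ← hc_def]
    rw [hlogb_eq]
    nlinarith
  have hsqbig : 4 * Real.exp 1 / δ' ≤ Real.sqrt m := by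
    rw [show (4 * Real.exp 1 / δ') = Real.sqrt ((4 * Real.exp 1 / δ') ^ 2) by
      rw [Real.sqrt_sq (by positivity)]]
    apply Real.sqrt_le_sqrt
    rw [div_pow]
    calc (4 * Real.exp 1) ^ 2 / δ' ^ 2 = 16 * Real.exp 1 ^ 2 / δ' ^ 2 := by ring_nf
    _ ≤ m := hmbig
  obtain ⟨K, hK_def⟩ : ∃ K : ℕ, K = ⌈max 0 ((m1 - 1) / δ')⌉₊ := ⟨_, rfl⟩
  have hKge : (m1 - 1) / δ' ≤ (K : ℝ) := by
    rw [hK_def]; exact le_trans (le_max_right _ _) (Nat.le_ceil _)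
  have hKd : m1 ≤ 1 + (K : ℝ) * δ' := by
    rw [div_le_iff₀ hδ'0] at hKge
    linarith
  obtain ⟨k, hk, hk1⟩ := descend b δ' hδ'0 hstep K m1 hKd
  have hwit : (Real.logb b)^[k + (i + 1)] n ≤ 1 := by
    rw [Function.iterate_add_apply]
    have heq : (Real.logb b)^[i + 1] n = m1 := by
      rw [Function.iterate_succ_apply', ← hm_def, ← hm1_def]
    rw [heq]
    exact hk1
  have hls : logStar b n ≤ k + (i + 1) := Nat.sInf_le hwit
  have hKub : (K : ℝ) < max 0 ((m1 - 1) / δ') + 1 := by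
    rw [hK_def]; exact Nat.ceil_lt_add_one (le_max_left _ _)
  have hmax : max 0 ((m1 - 1) / δ') ≤ m1 / δ' := by
    apply max_le
    · exact div_nonneg hm1nn (le_of_lt hδ'0)
    · gcongr
      linarith
  have hδ'sq : 4 * Real.exp 1 ≤ δ' * Real.sqrt m := by
    rw [div_le_iff₀ hδ'0] at hsqbig
    linarith [mul_comm (Real.sqrt m) δ']
  have hhalf1 : 2 * Real.exp 1 * Real.sqrt m ≤ δ' * m / 2 := by
    have h3 : 4 * Real.exp 1 * Real.sqrt m ≤ δ' * Real.sqrt m * Real.sqrt m :=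
      mul_le_mul_of_nonneg_right hδ'sq hsqnn
    have h4 : δ' * Real.sqrt m * Real.sqrt m = δ' * m := by rw [mul_assoc, hsqsq]
    linarith
  have hhalf : m1 / δ' ≤ m / 2 := by
    rw [div_le_iff₀ hδ'0]
    calc m1 ≤ 2 * Real.exp 1 * Real.sqrt m := hm1le
      _ ≤ δ' * m / 2 := hhalf1
      _ = m / 2 * δ' := by ring
  have hcast : ((k + (i + 1) : ℕ) : ℝ) = (k : ℝ) + (i : ℝ) + 1 := by push_cast; ring
  have hkK : (k : ℝ) ≤ (K : ℝ) := Nat.cast_le.mpr hk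
  calc (logStar b n : ℝ) ≤ ((k + (i + 1) : ℕ) : ℝ) := Nat.cast_le.mpr hls
    _ = (k : ℝ) + (i : ℝ) + 1 := hcast
    _ ≤ m / 2 + m / 2 := by
        have h1 : (k : ℝ) ≤ m1 / δ' + 1 := by linarith
        have h2 : (i : ℝ) + 2 ≤ m / 2 := by linarith
        linarith
    _ = m := by ring
end

section
/- For every real b > 1 and every n ∈ ℕ, log*_b(b↑↑n) = n. (That is, the iterated logarithm with base b is the inverse of the power tower with base b, as asserted in the paper.) -/
/-- The power tower `b ↑↑ n`, defined by `b ↑↑ 0 = 1` and `b ↑↑ (n+1) = b ^ (b ↑↑ n)`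
(real exponentiation). -/
noncomputable def powerTower (b : ℝ) : ℕ → ℝ
  | 0 => 1
  | n + 1 => b ^ powerTower b n

lemma one_le_powerTower (b : ℝ) (hb : 1 < b) : ∀ n, 1 ≤ powerTower b n
  | 0 => le_refl 1
  | n + 1 => by
    have h := one_le_powerTower b hb n
    calc (1 : ℝ) = b ^ (0 : ℝ) := by simp
    _ ≤ b ^ powerTower b n :=
      Real.rpow_le_rpow_of_exponent_le hb.le (by linarith)

lemma one_lt_powerTower (b : ℝ) (hb : 1 < b) (n : ℕ) (hn : 0 < n) :
    1 < powerTower b n := by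
  obtain ⟨m, rfl⟩ := Nat.exists_eq_succ_of_ne_zero hn.ne'
  show 1 < b ^ powerTower b m
  have h := one_le_powerTower b hb m
  calc (1 : ℝ) = b ^ (0 : ℝ) := by simp
  _ < b ^ powerTower b m := Real.rpow_lt_rpow_of_exponent_lt hb (by linarith)

lemma iter_logb_powerTower (b : ℝ) (hb : 1 < b) :
    ∀ i n, i ≤ n → (Real.logb b)^[i] (powerTower b n) = powerTower b (n - i) := by
  intro i
  induction i with
  | zero => simp
  | succ i ih =>
    intro n hin
    obtain ⟨m, rfl⟩ := Nat.exists_eq_add_of_le hin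
    have he : i + 1 + m = (i + m) + 1 := by omega
    rw [he, Function.iterate_succ_apply]
    show (Real.logb b)^[i] (Real.logb b (b ^ powerTower b (i + m))) = _
    rw [Real.logb_rpow (by linarith : 0 < b) (by linarith : b ≠ 1)]
    rw [ih (i + m) (Nat.le_add_right _ _)]
    congr 1
    omega

/-- The iterated logarithm with base `b > 1` is the inverse of the power tower with
base `b`: `log*_b (b ↑↑ n) = n`. -/
theorem logStar_powerTower (b : ℝ) (hb : 1 < b) (n : ℕ) :
    logStar b (powerTower b n) = n := by
  unfold logStar
  apply le_antisymm
  · apply Nat.sInf_le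
    show (Real.logb b)^[n] (powerTower b n) ≤ 1
    rw [iter_logb_powerTower b hb n n le_rfl]
    simp [powerTower]
  · apply le_of_not_gt
    intro hlt
    have hmem := Nat.sInf_mem (s := {i : ℕ | (Real.logb b)^[i] (powerTower b n) ≤ 1})
      ⟨n, by rw [Set.mem_setOf_eq, iter_logb_powerTower b hb n n le_rfl]; simp [powerTower]⟩
    set m := sInf {i : ℕ | (Real.logb b)^[i] (powerTower b n) ≤ 1}
    rw [Set.mem_setOf_eq, iter_logb_powerTower b hb m n hlt.le] at hmem
    have := one_lt_powerTower b hb (n - m) (by omega)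
    linarith
end

section
/- Let d > 0 be real and let µ : ℕ → ℝ → ℝ satisfy: (i) for all k ∈ ℕ and all real m > 1, µ(k, m) ≤ d·k·log(k) + µ(k−1, log_φ(m)) (where k−1 is truncated natural subtraction and log is the natural logarithm, with log 0 = 0); and (ii) for all k ∈ ℕ and all real m ≤ 1, µ(k, m) ≤ d. Then for all k ∈ ℕ and all real n, µ(k, n) ≤ d·k·log(k)·log*_φ(n) + d. -/
namespace PsortAux

local notation "φ" => goldenRatioReal

lemma sqrt5_lb : (2.23 : ℝ) ≤ Real.sqrt 5 := by
  rw [show (5:ℝ) = 2.23^2 + 0.0271 by norm_num]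
  nlinarith [Real.sq_sqrt (by norm_num : (0:ℝ) ≤ 2.23^2 + 0.0271),
    Real.sqrt_nonneg ((2.23:ℝ)^2 + 0.0271)]

lemma phi_gt : (1.615 : ℝ) ≤ φ := by
  have := sqrt5_lb; unfold goldenRatioReal; linarith

lemma one_lt_phi : (1:ℝ) < φ := by linarith [phi_gt]

lemma phi_pos : (0:ℝ) < φ := by linarith [phi_gt]

lemma log_phi_lb : (0.38 : ℝ) ≤ Real.log φ := by
  have hp := phi_pos
  have h1 : Real.log (1/φ) ≤ 1/φ - 1 :=
    Real.log_le_sub_one_of_pos (by positivity)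
  rw [Real.log_div one_ne_zero (ne_of_gt hp), Real.log_one] at h1
  have h2 : (1:ℝ)/φ ≤ 1/1.615 := by
    apply one_div_le_one_div_of_le (by norm_num) phi_gt
  have : 1 - 1/φ ≤ Real.log φ := by linarith
  have : (1:ℝ) - 1/1.615 ≤ Real.log φ := by linarith
  nlinarith

lemma contraction {y : ℝ} (hy : 1 < y) : Real.logb φ y ≤ (49/50) * y := by
  have he : (2.7182818283 : ℝ) < Real.exp 1 := Real.exp_one_gt_d9
  have hlog : Real.log y ≤ y / Real.exp 1 := by
    have h := Real.log_le_sub_one_of_pos (x := y / Real.exp 1)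
      (by positivity)
    rw [Real.log_div (by linarith) (Real.exp_ne_zero 1), Real.log_exp] at h
    linarith
  have hφ := log_phi_lb
  rw [Real.logb, div_le_iff₀ (by linarith)]
  have hy' : (0:ℝ) < y := by linarith
  have he' : (2.7 : ℝ) ≤ Real.exp 1 := by linarith
  have hprodlb : (0.38 : ℝ) * 2.7 ≤ Real.log φ * Real.exp 1 :=
    mul_le_mul hφ he' (by norm_num) (by linarith)
  have hprod : (1:ℝ) ≤ 49/50 * Real.log φ * Real.exp 1 := by nlinarith
  have := mul_le_mul_of_nonneg_left hprod hy'.le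
  have h3 : y / Real.exp 1 ≤ 49/50 * y * Real.log φ := by
    rw [div_le_iff₀ (Real.exp_pos 1)]
    nlinarith
  linarith

lemma logb_le_one {y : ℝ} (hy : y ≤ 1) (hy' : 0 ≤ y) : Real.logb φ y ≤ 1 := by
  have : Real.log y ≤ 0 := Real.log_nonpos hy' hy
  have := log_phi_lb
  rw [Real.logb]
  have : Real.log y / Real.log φ ≤ 0 := div_nonpos_of_nonpos_of_nonneg ‹_› (by linarith)
  linarith

lemma exists_iter_le_one (x : ℝ) : ∃ i, (Real.logb φ)^[i] x ≤ 1 := by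
  rcases le_or_gt x 1 with hx | hx
  · exact ⟨0, hx⟩
  · have hx0 : (0:ℝ) < x := by linarith
    obtain ⟨N, hN⟩ := exists_pow_lt_of_lt_one (x := 1/x) (y := (49/50 : ℝ))
      (by positivity) (by norm_num)
    by_contra h
    push_neg at h
    have key : ∀ i, (49/50 : ℝ)^i * x < (Real.logb φ)^[i] x ∨
        (Real.logb φ)^[i] x ≤ (49/50 : ℝ)^i * x := fun i => by
      exact (lt_or_ge _ _).imp id id
    have main : ∀ i, (Real.logb φ)^[i] x ≤ (49/50 : ℝ)^i * x := by
      intro i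
      induction i with
      | zero => simp
      | succ i ih =>
        rw [Function.iterate_succ_apply']
        have h1 : 1 < (Real.logb φ)^[i] x := h i
        calc Real.logb φ ((Real.logb φ)^[i] x) ≤ (49/50) * (Real.logb φ)^[i] x :=
              contraction h1
          _ ≤ (49/50) * ((49/50 : ℝ)^i * x) := by nlinarith
          _ = (49/50 : ℝ)^(i+1) * x := by ring
    have hmain := main N
    have hN' : (49/50 : ℝ)^N * x < 1 := by
      have h5 := mul_lt_mul_of_pos_right hN hx0
      rwa [one_div, inv_mul_cancel₀ hx0.ne'] at h5
    exact absurd (lt_of_le_of_lt hmain hN') (not_lt.mpr (le_of_lt (h N)))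

lemma logStar_succ {n : ℝ} (hn : 1 < n) :
    logStar φ n = logStar φ (Real.logb φ n) + 1 := by
  set S : Set ℕ := {i : ℕ | (Real.logb φ)^[i] n ≤ 1}
  set T : Set ℕ := {i : ℕ | (Real.logb φ)^[i] (Real.logb φ n) ≤ 1}
  have hmem : ∀ i, (i + 1 ∈ S ↔ i ∈ T) := by
    intro i
    simp only [S, T, Set.mem_setOf_eq, Function.iterate_succ_apply]
  have hT : T.Nonempty := exists_iter_le_one _
  have hS : S.Nonempty := by
    obtain ⟨i, hi⟩ := hT
    exact ⟨i + 1, (hmem i).mpr hi⟩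
  have h0 : 0 ∉ S := by simpa [S] using hn
  unfold logStar
  apply le_antisymm
  · have : sInf T ∈ T := Nat.sInf_mem hT
    exact Nat.sInf_le ((hmem _).mpr this)
  · have hmemS : sInf S ∈ S := Nat.sInf_mem hS
    have hne : sInf S ≠ 0 := fun h => h0 (h ▸ hmemS)
    obtain ⟨j, hj⟩ := Nat.exists_eq_succ_of_ne_zero hne
    rw [hj] at hmemS ⊢
    have : j ∈ T := (hmem j).mp hmemS
    exact Nat.add_le_add_right (Nat.sInf_le this) 1

lemma logStar_zero_le {n : ℝ} (h : logStar φ n = 0) : n ≤ 1 := by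
  have hne : Set.Nonempty {i : ℕ | (Real.logb φ)^[i] n ≤ 1} := exists_iter_le_one n
  have hmem := Nat.sInf_mem hne
  unfold logStar at h
  rw [h] at hmem
  simpa using hmem

lemma cast_mul_log_mono (k : ℕ) :
    ((k - 1 : ℕ) : ℝ) * Real.log (k - 1 : ℕ) ≤ (k : ℝ) * Real.log k := by
  have h1 : ((k - 1 : ℕ) : ℝ) ≤ (k : ℝ) := Nat.cast_le.mpr (Nat.sub_le k 1)
  have h2 : Real.log ((k - 1 : ℕ) : ℝ) ≤ Real.log (k : ℝ) := by
    rcases Nat.eq_zero_or_pos (k - 1) with h | h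
    · rw [h]; simpa using Real.log_natCast_nonneg k
    · exact Real.log_le_log (by exact_mod_cast h) h1
  have h3 := Real.log_natCast_nonneg (k - 1)
  have h4 : (0:ℝ) ≤ ((k - 1 : ℕ) : ℝ) := Nat.cast_nonneg _
  nlinarith

end PsortAux

/-- The recurrence for the running time of `k` calls to the iterator:
if `μ k m ≤ d·k·log k + μ (k-1) (log_φ m)` for `m > 1` and `μ k m ≤ d` for `m ≤ 1`,
then `μ k n ≤ d·k·log k·log*_φ n + d`. -/
theorem psort_recurrence_bound (d : ℝ) (hd : 0 < d) (μ : ℕ → ℝ → ℝ)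
    (h1 : ∀ (k : ℕ) (m : ℝ), 1 < m →
      μ k m ≤ d * k * Real.log k + μ (k - 1) (Real.logb goldenRatioReal m))
    (h2 : ∀ (k : ℕ) (m : ℝ), m ≤ 1 → μ k m ≤ d) :
    ∀ (k : ℕ) (n : ℝ),
      μ k n ≤ d * k * Real.log k * (logStar goldenRatioReal n) + d := by
  have key : ∀ (s k : ℕ) (n : ℝ), logStar goldenRatioReal n ≤ s →
      μ k n ≤ d * k * Real.log k * (logStar goldenRatioReal n) + d := by
    intro s
    induction s with
    | zero =>
      intro k n hs
      have h0 : logStar goldenRatioReal n = 0 := Nat.le_zero.mp hs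
      rw [h0]
      have := h2 k n (PsortAux.logStar_zero_le h0)
      simpa using this
    | succ s ih =>
      intro k n hs
      rcases le_or_gt n 1 with hn | hn
      · have := h2 k n hn
        have hnn : (0:ℝ) ≤ d * k * Real.log k * (logStar goldenRatioReal n) := by
          have := Real.log_natCast_nonneg k
          positivity
        linarith
      · have hrec := PsortAux.logStar_succ hn
        have hle : logStar goldenRatioReal (Real.logb goldenRatioReal n) ≤ s := by omega
        have hIH := ih (k - 1) (Real.logb goldenRatioReal n) hle
        have hmono := PsortAux.cast_mul_log_mono k
        have hcall := h1 k n hn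
        have hlogk := Real.log_natCast_nonneg k
        have hcast : (logStar goldenRatioReal n : ℝ) =
            (logStar goldenRatioReal (Real.logb goldenRatioReal n) : ℝ) + 1 := by
          rw [hrec]; push_cast; ring
        have hsnn : (0:ℝ) ≤ (logStar goldenRatioReal (Real.logb goldenRatioReal n) : ℝ) :=
          Nat.cast_nonneg _
        calc μ k n ≤ d * k * Real.log k + μ (k - 1) (Real.logb goldenRatioReal n) := hcall
          _ ≤ d * k * Real.log k +
              (d * (k-1:ℕ) * Real.log (k-1:ℕ) * (logStar goldenRatioReal (Real.logb goldenRatioReal n)) + d) := by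
              linarith
          _ ≤ d * k * Real.log k * (logStar goldenRatioReal n) + d := by
              rw [hcast]
              nlinarith [mul_le_mul_of_nonneg_right
                (mul_le_mul_of_nonneg_left hmono hd.le) hsnn]
  intro k n
  exact key (logStar goldenRatioReal n) k n le_rfl
end

section
/- Define s : ℕ → ℝ → ℝ by s(0, x) = x and s(i+1, x) = max(log_φ(s(i, x)), 1). Then for every i ∈ ℕ there exists a real x₀ such that for all real x > x₀, the product ∏_{j = i+1}^{log*_φ(x)} s(j, x) is at most s(i, x). -/
/-- `layerBound i x`: the bound on the maximum size of a layer-`i` team in a layered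
tournament tree over a list of `x` elements: `s 0 x = x`,
`s (i+1) x = max (log_φ (s i x)) 1`. -/
noncomputable def layerBound : ℕ → ℝ → ℝ
  | 0, x => x
  | i + 1, x => max (Real.logb goldenRatioReal (layerBound i x)) 1

namespace GoldenAux

local notation "φ" => goldenRatioReal

lemma sqrt5_ge : (2.2:ℝ) ≤ Real.sqrt 5 := by
  rw [show (2.2:ℝ) = Real.sqrt (2.2^2) from (Real.sqrt_sq (by norm_num)).symm]
  exact Real.sqrt_le_sqrt (by norm_num)

lemma sqrt5_le : Real.sqrt 5 ≤ (3:ℝ) := by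
  rw [show (3:ℝ) = Real.sqrt (3^2) from (Real.sqrt_sq (by norm_num)).symm]
  exact Real.sqrt_le_sqrt (by norm_num)

lemma phi_ge : (1.6:ℝ) ≤ φ := by
  have := sqrt5_ge; unfold goldenRatioReal; linarith

lemma phi_le : φ ≤ (2:ℝ) := by
  have := sqrt5_le; unfold goldenRatioReal; linarith

lemma one_lt_phi : (1:ℝ) < φ := lt_of_lt_of_le (by norm_num) phi_ge
lemma phi_pos : (0:ℝ) < φ := lt_trans one_pos one_lt_phi
lemma phi_ne_one : φ ≠ 1 := ne_of_gt one_lt_phi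

lemma exp_point_four : Real.exp 0.4 ≤ 1.5625 := by
  have h1 := Real.add_one_le_exp (-0.2:ℝ)
  have h2 : Real.exp (-0.2:ℝ) * Real.exp (0.2:ℝ) = 1 := by
    rw [← Real.exp_add]; norm_num
  have h3 : Real.exp (0.2:ℝ) ≤ 1.25 := by nlinarith [Real.exp_pos (0.2:ℝ)]
  have h4 : Real.exp (0.4:ℝ) = Real.exp (0.2:ℝ) * Real.exp (0.2:ℝ) := by
    rw [← Real.exp_add]; norm_num
  nlinarith [Real.exp_pos (0.2:ℝ)]

lemma log_phi : (0.4:ℝ) ≤ Real.log φ := by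
  rw [Real.le_log_iff_exp_le phi_pos]
  calc Real.exp 0.4 ≤ 1.5625 := exp_point_four
    _ ≤ φ := le_trans (by norm_num) phi_ge

lemma logb_le_25 {y : ℝ} (hy : 1 ≤ y) : Real.logb φ y ≤ 2.5 * Real.log y := by
  have h1 : 0 ≤ Real.log y := Real.log_nonneg hy
  have h2 := log_phi
  rw [Real.logb, div_le_iff₀ (by linarith)]
  nlinarith

lemma ln_two_half : Real.log 2.5 ≤ 0.96 := by
  rw [Real.log_le_iff_le_exp (by norm_num)]
  have h06 : (1.06:ℝ) ≤ Real.exp 0.06 := by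
    have := Real.add_one_le_exp (0.06:ℝ); linarith
  have h : Real.exp (0.96:ℝ) = Real.exp 0.06 ^ (16:ℕ) := by
    rw [← Real.exp_nat_mul]; norm_num
  calc (2.5:ℝ) ≤ 1.06 ^ (16:ℕ) := by norm_num
    _ ≤ Real.exp 0.06 ^ (16:ℕ) := pow_le_pow_left₀ (by norm_num) h06 16
    _ = Real.exp 0.96 := h.symm

lemma contraction {y : ℝ} (hy : 1 ≤ y) : Real.logb φ y ≤ y - 0.1 := by
  have h1 := logb_le_25 hy
  have h2 : Real.log (y/2.5) ≤ y/2.5 - 1 := Real.log_le_sub_one_of_pos (by positivity)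
  have h3 : Real.log (y/2.5) = Real.log y - Real.log 2.5 :=
    Real.log_div (by positivity) (by norm_num)
  have h4 := ln_two_half
  have h5 : y / 2.5 = 0.4 * y := by ring
  linarith

lemma ln_ten : Real.log 10 ≤ 2.4 := by
  rw [Real.log_le_iff_le_exp (by norm_num)]
  have e1 : (2.718:ℝ) ≤ Real.exp 1 := le_of_lt (by have := Real.exp_one_gt_d9; linarith)
  have e04 : (1.4:ℝ) ≤ Real.exp 0.4 := by have := Real.add_one_le_exp (0.4:ℝ); linarith
  have h : Real.exp (2.4:ℝ) = Real.exp 1 * Real.exp 1 * Real.exp 0.4 := by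
    rw [← Real.exp_add, ← Real.exp_add]; norm_num
  nlinarith [Real.exp_pos (1:ℝ), Real.exp_pos (0.4:ℝ)]

lemma sqrt_bound {y : ℝ} (hy : 200 ≤ y) : Real.logb φ y ≤ Real.sqrt y := by
  set s := Real.sqrt y with hs
  have hs14 : (14:ℝ) ≤ s := by
    rw [hs, Real.le_sqrt (by norm_num) (by linarith)]; linarith
  have hlog : Real.log s = Real.log y / 2 := Real.log_sqrt (by linarith)
  have h2 : Real.log (s/10) ≤ s/10 - 1 := Real.log_le_sub_one_of_pos (by linarith)
  have h3 : Real.log (s/10) = Real.log s - Real.log 10 :=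
    Real.log_div (by linarith) (by norm_num)
  have h4 := ln_ten
  have h5 := logb_le_25 (show (1:ℝ) ≤ y by linarith)
  have h6 : s / 10 = 0.1 * s := by ring
  linarith

/-- The potential function controlling products of iterated logs. -/
noncomputable def G (y : ℝ) : ℝ := (y ⊔ 1)^2 * (200:ℝ) ^ (10 * (min y 200 ⊔ 1))

lemma rpow_pos (e : ℝ) : (0:ℝ) < (200:ℝ) ^ e := Real.rpow_pos_of_pos (by norm_num) e

lemma one_le_rexp {e : ℝ} (he : 0 ≤ e) : (1:ℝ) ≤ (200:ℝ) ^ e := by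
  calc (1:ℝ) = (200:ℝ) ^ (0:ℝ) := (Real.rpow_zero _).symm
    _ ≤ (200:ℝ) ^ e := Real.rpow_le_rpow_of_exponent_le (by norm_num) he

lemma exp_nonneg (y : ℝ) : 0 ≤ 10 * (min y 200 ⊔ 1) := by
  have : (1:ℝ) ≤ min y 200 ⊔ 1 := le_max_right _ _
  linarith

lemma one_le_G (y : ℝ) : 1 ≤ G y := by
  have h1 : (1:ℝ) ≤ y ⊔ 1 := le_max_right _ _
  have h2 := one_le_rexp (exp_nonneg y)
  unfold G; nlinarith

lemma sup_le_G (y : ℝ) : y ⊔ 1 ≤ G y := by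
  have h1 : (1:ℝ) ≤ y ⊔ 1 := le_max_right _ _
  have h2 := one_le_rexp (exp_nonneg y)
  unfold G; nlinarith

lemma step {y : ℝ} (hy : 1 < y) : y * G (Real.logb φ y) ≤ G y := by
  set l := Real.logb φ y with hl
  have hy0 : (0:ℝ) < y := by linarith
  have hsupy : y ⊔ 1 = y := max_eq_left hy.le
  rcases le_or_gt 200 y with h200 | h200
  · -- y ≥ 200
    have hminy : min y 200 ⊔ 1 = 200 := by
      rw [min_eq_right h200, max_eq_left (by norm_num)]
    have hl1 : (1:ℝ) ≤ l := by
      have h := Real.logb_le_logb_of_le one_lt_phi phi_pos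
        (le_trans phi_le (by linarith : (2:ℝ) ≤ y))
      rwa [Real.logb_self_eq_one one_lt_phi] at h
    have hsl : l ≤ Real.sqrt y := sqrt_bound h200
    have hl2 : l^2 ≤ y := by
      nlinarith [Real.sq_sqrt hy0.le, Real.sqrt_nonneg y]
    have hsupl : l ⊔ 1 = l := max_eq_left hl1
    have hexp : (200:ℝ) ^ (10 * (min l 200 ⊔ 1)) ≤ (200:ℝ) ^ (10 * (200:ℝ)) := by
      apply Real.rpow_le_rpow_of_exponent_le (by norm_num)
      have h1 : min l 200 ⊔ 1 ≤ 200 := max_le (min_le_right _ _) (by norm_num)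
      linarith
    unfold G
    rw [hsupy, hsupl, hminy]
    calc y * (l^2 * (200:ℝ) ^ (10 * (min l 200 ⊔ 1)))
        ≤ y * (y * (200:ℝ) ^ (10 * (200:ℝ))) := by
          apply mul_le_mul_of_nonneg_left _ hy0.le
          exact mul_le_mul hl2 hexp (rpow_pos _).le (by linarith)
      _ = y^2 * (200:ℝ) ^ (10 * (200:ℝ)) := by ring
  · -- 1 < y < 200
    have hminy : min y 200 ⊔ 1 = y := by
      rw [min_eq_left h200.le, max_eq_left hy.le]
    have hcon : l ≤ y - 0.1 := contraction hy.le
    unfold G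
    rw [hsupy, hminy]
    rcases le_or_gt 1.1 y with h11 | h11
    · -- 1.1 ≤ y < 200
      have hm : l ⊔ 1 ≤ y - 0.1 := max_le hcon (by linarith)
      have hm1 : (1:ℝ) ≤ l ⊔ 1 := le_max_right _ _
      have hexp : (200:ℝ) ^ (10 * (min l 200 ⊔ 1)) ≤ (200:ℝ) ^ (10 * y) / 200 := by
        have hEl : min l 200 ⊔ 1 ≤ y - 0.1 := max_le
          (le_trans (min_le_left _ _) hcon) (by linarith)
        have h1 : (200:ℝ) ^ (10 * (min l 200 ⊔ 1)) ≤ (200:ℝ) ^ (10 * y - 1) :=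
          Real.rpow_le_rpow_of_exponent_le (by norm_num) (by linarith)
        rwa [Real.rpow_sub (by norm_num), Real.rpow_one] at h1
      have hsq : (l ⊔ 1)^2 ≤ y^2 := by nlinarith
      have hP := (rpow_pos (10 * y)).le
      calc y * ((l ⊔ 1)^2 * (200:ℝ) ^ (10 * (min l 200 ⊔ 1)))
          ≤ y * (y^2 * ((200:ℝ) ^ (10 * y) / 200)) := by
            apply mul_le_mul_of_nonneg_left _ hy0.le
            exact mul_le_mul hsq hexp (rpow_pos _).le (by positivity)
        _ = y^2 * (200:ℝ) ^ (10 * y) * (y / 200) := by ring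
        _ ≤ y^2 * (200:ℝ) ^ (10 * y) * 1 := by
            apply mul_le_mul_of_nonneg_left (by linarith) (by positivity)
        _ = y^2 * (200:ℝ) ^ (10 * y) := by ring
    · -- 1 < y < 1.1
      have hlsmall : l ≤ 0.25 := by
        have h1 := logb_le_25 hy.le
        have h2 := Real.log_le_sub_one_of_pos hy0
        linarith
      have hsupl : l ⊔ 1 = 1 := max_eq_right (by linarith)
      have hEl : min l 200 ⊔ 1 = 1 :=
        max_eq_right (le_trans (min_le_left _ _) (by linarith))
      rw [hsupl, hEl]
      have hexp : (200:ℝ) ^ (10 * (1:ℝ)) ≤ (200:ℝ) ^ (10 * y) :=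
        Real.rpow_le_rpow_of_exponent_le (by norm_num) (by linarith)
      calc y * ((1:ℝ)^2 * (200:ℝ) ^ (10 * (1:ℝ)))
          = y * (200:ℝ) ^ (10 * (1:ℝ)) := by ring
        _ ≤ y * (200:ℝ) ^ (10 * y) := mul_le_mul_of_nonneg_left hexp hy0.le
        _ ≤ y^2 * (200:ℝ) ^ (10 * y) :=
            mul_le_mul_of_nonneg_right (by nlinarith) (rpow_pos _).le

lemma q_le_G : ∀ (n : ℕ) (y : ℝ), (∀ k, k + 1 < n → 1 < (Real.logb φ)^[k] y) →
    (∏ k ∈ Finset.range n, ((Real.logb φ)^[k] y ⊔ 1)) ≤ G y := by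
  intro n
  induction n with
  | zero => intro y _; simpa using one_le_G y
  | succ m ih =>
    intro y hy
    rw [Finset.prod_range_succ']
    simp only [Function.iterate_succ_apply, Function.iterate_zero_apply]
    rcases Nat.eq_zero_or_pos m with hm | hm
    · subst hm; simpa using sup_le_G y
    · have hy1 : (1:ℝ) < y := by simpa using hy 0 (by omega)
      have h1 : (∏ k ∈ Finset.range m, ((Real.logb φ)^[k] (Real.logb φ y) ⊔ 1))
          ≤ G (Real.logb φ y) := by
        apply ih
        intro k hk
        have := hy (k + 1) (by omega)
        rwa [Function.iterate_succ_apply] at this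
      have hprodnn : (0:ℝ) ≤ ∏ k ∈ Finset.range m, ((Real.logb φ)^[k] (Real.logb φ y) ⊔ 1) :=
        Finset.prod_nonneg fun k _ => le_trans zero_le_one (le_max_right _ _)
      rw [max_eq_left hy1.le]
      calc (∏ k ∈ Finset.range m, ((Real.logb φ)^[k] (Real.logb φ y) ⊔ 1)) * y
          ≤ G (Real.logb φ y) * y :=
            mul_le_mul_of_nonneg_right h1 (by linarith)
        _ = y * G (Real.logb φ y) := by ring
        _ ≤ G y := step hy1

lemma G_le {z : ℝ} (hz : (200:ℝ)^(4002:ℕ) ≤ z) : G (Real.logb φ z) ≤ z := by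
  have h200 : (200:ℝ) ≤ (200:ℝ)^(4002:ℕ) := le_self_pow₀ (by norm_num) (by norm_num)
  have hz200 : (200:ℝ) ≤ z := le_trans h200 hz
  have hz0 : (0:ℝ) < z := lt_of_lt_of_le (by norm_num) hz200
  set w := Real.logb φ z with hw
  have hw1 : (1:ℝ) ≤ w := by
    have h := Real.logb_le_logb_of_le one_lt_phi phi_pos
      (le_trans phi_le (le_trans (by norm_num) hz200 : (2:ℝ) ≤ z))
    rwa [Real.logb_self_eq_one one_lt_phi] at h
  set s4 := Real.sqrt (Real.sqrt z) with hs4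
  have hs4pos : 0 < s4 := Real.sqrt_pos.mpr (Real.sqrt_pos.mpr hz0)
  have hlog : Real.log z ≤ 4 * s4 := by
    have h1 : Real.log s4 = Real.log z / 4 := by
      rw [hs4, Real.log_sqrt (Real.sqrt_nonneg z), Real.log_sqrt hz0.le]; ring
    have h2 : Real.log s4 ≤ s4 - 1 := Real.log_le_sub_one_of_pos hs4pos
    linarith
  have hw10 : w ≤ 10 * s4 := by
    have := logb_le_25 (show (1:ℝ) ≤ z from le_trans (by norm_num) hz200)
    rw [← hw] at this
    linarith
  have hsq : s4^2 = Real.sqrt z := Real.sq_sqrt (Real.sqrt_nonneg z)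
  have hw2 : w^2 ≤ 100 * Real.sqrt z := by nlinarith
  have hexp : (200:ℝ) ^ (10 * (min w 200 ⊔ 1)) ≤ (200:ℝ) ^ (2000:ℕ) := by
    have h1 : min w 200 ⊔ 1 ≤ 200 := max_le (min_le_right _ _) (by norm_num)
    have h2 : (200:ℝ) ^ (10 * (min w 200 ⊔ 1)) ≤ (200:ℝ) ^ (((2000:ℕ):ℝ)) :=
      Real.rpow_le_rpow_of_exponent_le (by norm_num) (by push_cast; linarith)
    rwa [Real.rpow_natCast] at h2
  have hsqrtZ : (100:ℝ) * (200:ℝ)^(2000:ℕ) ≤ Real.sqrt z := by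
    have h1 : ((100:ℝ) * (200:ℝ)^(2000:ℕ))^2 ≤ (200:ℝ)^(4002:ℕ) := by
      rw [mul_pow, ← pow_mul]
      norm_num
      rw [show (4002:ℕ) = 4000 + 2 from rfl, pow_add]
      have ht := pow_pos (by norm_num : (0:ℝ) < 200) 4000
      generalize (200:ℝ) ^ 4000 = t at ht ⊢
      nlinarith [ht]
    calc (100:ℝ) * (200:ℝ)^(2000:ℕ)
        = Real.sqrt (((100:ℝ) * (200:ℝ)^(2000:ℕ))^2) :=
          (Real.sqrt_sq (by positivity)).symm
      _ ≤ Real.sqrt z := Real.sqrt_le_sqrt (le_trans h1 hz)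
  unfold G
  rw [max_eq_left hw1]
  calc w^2 * (200:ℝ) ^ (10 * (min w 200 ⊔ 1))
      ≤ (100 * Real.sqrt z) * (200:ℝ)^(2000:ℕ) :=
        mul_le_mul hw2 hexp (rpow_pos _).le (by positivity)
    _ = (100 * (200:ℝ)^(2000:ℕ)) * Real.sqrt z := by ring
    _ ≤ Real.sqrt z * Real.sqrt z :=
        mul_le_mul_of_nonneg_right hsqrtZ (Real.sqrt_nonneg z)
    _ = z := Real.mul_self_sqrt hz0.le

/-- Tower function: iterated exponential, used to pick `x₀`. -/
noncomputable def tower : ℕ → ℝ → ℝ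
  | 0, z => z
  | i + 1, z => tower i (goldenRatioReal ^ z)

lemma tower_le : ∀ (i : ℕ) (z x : ℝ), tower i z ≤ x → z ≤ layerBound i x := by
  intro i
  induction i with
  | zero => intro z x h; exact h
  | succ m ih =>
    intro z x h
    have h1 : φ ^ z ≤ layerBound m x := ih _ _ h
    have h2 : z ≤ Real.logb φ (layerBound m x) := by
      have h3 := Real.logb_le_logb_of_le one_lt_phi
        (Real.rpow_pos_of_pos phi_pos z) h1
      rwa [Real.logb_rpow phi_pos phi_ne_one] at h3
    simp only [layerBound]
    exact le_trans h2 (le_max_left _ _)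

lemma one_le_layer (i : ℕ) {x : ℝ} (hx : 1 ≤ x) : 1 ≤ layerBound i x := by
  cases i with
  | zero => exact hx
  | succ n => exact le_max_right _ _

lemma layer_eq_iter : ∀ (j : ℕ) {x : ℝ}, 1 ≤ x →
    (∀ k, k < j → 1 < (Real.logb φ)^[k] x) →
    layerBound j x = (Real.logb φ)^[j] x ⊔ 1 := by
  intro j
  induction j with
  | zero =>
    intro x hx _
    simp only [layerBound, Function.iterate_zero_apply]
    exact (max_eq_left hx).symm
  | succ m ih =>
    intro x hx h
    have h1 : 1 < (Real.logb φ)^[m] x := h m (by omega)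
    simp only [layerBound]
    rw [ih hx (fun k hk => h k (by omega)), max_eq_left h1.le,
      Function.iterate_succ_apply']

end GoldenAux

/-- For every `i`, eventually in `x` the product of the deeper-layer team-size bounds
`∏_{j = i+1}^{log*_φ x} s j x` is at most the layer-`i` bound `s i x`. -/
theorem prod_layerBound_le (i : ℕ) :
    ∃ x₀ : ℝ, ∀ x : ℝ, x₀ < x →
      (∏ j ∈ Finset.Icc (i + 1) (logStar goldenRatioReal x), layerBound j x)
        ≤ layerBound i x := by
  refine ⟨max (GoldenAux.tower i ((200:ℝ)^(4002:ℕ))) 1, fun x hx => ?_⟩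
  have hx1 : (1:ℝ) < x := lt_of_le_of_lt (le_max_right _ _) hx
  have hxT : GoldenAux.tower i ((200:ℝ)^(4002:ℕ)) ≤ x :=
    le_trans (le_max_left _ _) hx.le
  set L := logStar goldenRatioReal x with hLdef
  rcases le_or_gt L i with hLi | hiL
  · rw [Finset.Icc_eq_empty (by omega)]
    simpa using GoldenAux.one_le_layer i hx1.le
  · have hiter : ∀ k, k < L → 1 < (Real.logb goldenRatioReal)^[k] x := by
      intro k hk
      by_contra hc
      push_neg at hc
      have : L ≤ k := Nat.sInf_le hc
      omega
    have hzdef : layerBound i x = (Real.logb goldenRatioReal)^[i] x := by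
      rw [GoldenAux.layer_eq_iter i hx1.le (fun k hk => hiter k (by omega)),
        max_eq_left (hiter i hiL).le]
    set z := (Real.logb goldenRatioReal)^[i] x with hzz
    have hzZ : (200:ℝ)^(4002:ℕ) ≤ z := hzdef ▸ GoldenAux.tower_le i _ x hxT
    have hprod : (∏ j ∈ Finset.Icc (i+1) L, layerBound j x)
        = ∏ k ∈ Finset.range (L - i),
            ((Real.logb goldenRatioReal)^[k] ((Real.logb goldenRatioReal)^[i+1] x) ⊔ 1) := by
      rw [← Finset.Ico_add_one_right_eq_Icc, Finset.prod_Ico_eq_prod_range]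
      have hn : L + 1 - (i + 1) = L - i := by omega
      rw [hn]
      apply Finset.prod_congr rfl
      intro k hk
      rw [Finset.mem_range] at hk
      rw [GoldenAux.layer_eq_iter (i+1+k) hx1.le (fun k' hk' => hiter k' (by omega))]
      congr 1
      rw [← Function.iterate_add_apply]
      congr 1
      omega
    have hq : (∏ k ∈ Finset.range (L - i),
          ((Real.logb goldenRatioReal)^[k] ((Real.logb goldenRatioReal)^[i+1] x) ⊔ 1))
        ≤ GoldenAux.G ((Real.logb goldenRatioReal)^[i+1] x) := by
      apply GoldenAux.q_le_G
      intro k hk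
      rw [← Function.iterate_add_apply]
      have hidx : k + (i + 1) < L := by omega
      exact hiter _ hidx
    have hy : (Real.logb goldenRatioReal)^[i+1] x = Real.logb goldenRatioReal z := by
      rw [Function.iterate_succ_apply', ← hzz]
    rw [hprod, hzdef]
    calc (∏ k ∈ Finset.range (L - i),
          ((Real.logb goldenRatioReal)^[k] ((Real.logb goldenRatioReal)^[i+1] x) ⊔ 1))
        ≤ GoldenAux.G ((Real.logb goldenRatioReal)^[i+1] x) := hq
      _ = GoldenAux.G (Real.logb goldenRatioReal z) := by rw [hy]
      _ ≤ z := GoldenAux.G_le hzZ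
end
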